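/- Let X ⊆ ℝᴸ be a compact set, Y = {0} ⊆ ℝ^ℓ. Then for all 0 ≤ k, 𝒢̲_k(X × {0}, ℝᴸ × ℝ^ℓ) = 𝒢̲_k(X, ℝᴸ) and 𝒢̄_k(X × {0}, ℝᴸ × ℝ^ℓ) = 𝒢̄_k(X, ℝᴸ); in particular, the Gaussian Minkowski content of a compact set in Euclidean space is unchanged under the standard inclusion ℝᴸ ⊆ ℝ^{L+ℓ}. -/

import Mathlib

open MeasureTheory Filter

variable {α : Type*} [MetricSpace α] [MeasurableSpace α]

/-- Lower Gaussian Minkowski content of codimension `m` of `X ⊆ α` with respect to `μ`. -/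
noncomputable def lowerGaussMink (μ : Measure α) (m : ℕ) (X : Set α) : ENNReal :=
  liminf (fun u : ℝ => ENNReal.ofReal (u ^ m) *
    ∫⁻ x, ENNReal.ofReal (Real.exp (-Real.pi * u ^ 2 * Metric.infDist x X ^ 2)) ∂μ) atTop

/-- Upper Gaussian Minkowski content. -/
noncomputable def upperGaussMink (μ : Measure α) (m : ℕ) (X : Set α) : ENNReal :=
  limsup (fun u : ℝ => ENNReal.ofReal (u ^ m) *
    ∫⁻ x, ENNReal.ofReal (Real.exp (-Real.pi * u ^ 2 * Metric.infDist x X ^ 2)) ∂μ) atTop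

/-- The standard inclusion `ℝᴸ ⊆ ℝ^{L+ℓ}` (append zeros). -/
noncomputable def stdIncl (L l : ℕ) (x : EuclideanSpace ℝ (Fin L)) :
    EuclideanSpace ℝ (Fin (L + l)) :=
  (WithLp.equiv 2 (Fin (L + l) → ℝ)).symm
    (fun i => if h : (i : ℕ) < L then x ⟨i, h⟩ else 0)

namespace Stmt17Aux

variable {L l : ℕ}

noncomputable def projL (z : EuclideanSpace ℝ (Fin (L + l))) : EuclideanSpace ℝ (Fin L) :=
  WithLp.toLp 2 (fun i => z (Fin.castAdd l i))

noncomputable def projR (z : EuclideanSpace ℝ (Fin (L + l))) : EuclideanSpace ℝ (Fin l) :=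
  WithLp.toLp 2 (fun j => z (Fin.natAdd L j))

lemma stdIncl_castAdd (y : EuclideanSpace ℝ (Fin L)) (i : Fin L) :
    stdIncl L l y (Fin.castAdd l i) = y i := by
  show (if h : ((Fin.castAdd l i : Fin (L + l)) : ℕ) < L then y ⟨(Fin.castAdd l i : ℕ), h⟩
    else (0 : ℝ)) = y i
  rw [dif_pos (by simpa using i.isLt)]
  rfl

lemma stdIncl_natAdd (y : EuclideanSpace ℝ (Fin L)) (j : Fin l) :
    stdIncl L l y (Fin.natAdd L j) = 0 := by
  show (if h : ((Fin.natAdd L j : Fin (L + l)) : ℕ) < L then y ⟨(Fin.natAdd L j : ℕ), h⟩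
    else 0) = 0
  rw [dif_neg (by simp)]

lemma dist_stdIncl (z : EuclideanSpace ℝ (Fin (L + l))) (y : EuclideanSpace ℝ (Fin L)) :
    dist z (stdIncl L l y) = Real.sqrt (dist (projL z) y ^ 2 + ‖projR z‖ ^ 2) := by
  rw [EuclideanSpace.dist_eq, EuclideanSpace.dist_eq, EuclideanSpace.norm_eq]
  congr 1
  rw [Fin.sum_univ_add]
  rw [Real.sq_sqrt (by positivity), Real.sq_sqrt (by positivity)]
  congr 1
  · exact Finset.sum_congr rfl fun i _ => by rw [stdIncl_castAdd]; rfl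
  · exact Finset.sum_congr rfl fun j _ => by
      rw [stdIncl_natAdd]
      simp [projR, Real.dist_eq, Real.norm_eq_abs, sq_abs]

lemma isometry_stdIncl : Isometry (stdIncl L l) := by
  intro a b
  rw [edist_dist, edist_dist]
  congr 1
  rw [dist_stdIncl]
  have : projL (L := L) (l := l) (stdIncl L l a) = a := by
    ext i; simp [projL, stdIncl_castAdd]
  have h2 : projR (L := L) (l := l) (stdIncl L l a) = 0 := by
    ext j; simp [projR, stdIncl_natAdd]
  rw [this, h2, norm_zero]
  simp [Real.sqrt_sq dist_nonneg]

lemma infDist_stdIncl {X : Set (EuclideanSpace ℝ (Fin L))} (hX : IsCompact X)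
    (hXne : X.Nonempty) (z : EuclideanSpace ℝ (Fin (L + l))) :
    Metric.infDist z (stdIncl L l '' X) =
      Real.sqrt (Metric.infDist (projL z) X ^ 2 + ‖projR z‖ ^ 2) := by
  apply le_antisymm
  · obtain ⟨y₀, hy₀X, hy₀⟩ := hX.exists_infDist_eq_dist hXne (projL z)
    calc Metric.infDist z (stdIncl L l '' X) ≤ dist z (stdIncl L l y₀) :=
          Metric.infDist_le_dist_of_mem ⟨y₀, hy₀X, rfl⟩
      _ = _ := by rw [dist_stdIncl, hy₀]
  · have hS : IsCompact (stdIncl L l '' X) := hX.image isometry_stdIncl.continuous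
    obtain ⟨w, hwS, hw⟩ := hS.exists_infDist_eq_dist (hXne.image _) z
    obtain ⟨y, hyX, rfl⟩ := hwS
    rw [hw, dist_stdIncl]
    apply Real.sqrt_le_sqrt
    have h1 : Metric.infDist (projL z) X ≤ dist (projL z) y :=
      Metric.infDist_le_dist_of_mem hyX
    nlinarith [Metric.infDist_nonneg (x := projL z) (s := X), dist_nonneg (x := projL z) (y := y)]

/-- The measure-preserving map `ES L × ES l → ES (L+l)`. -/
noncomputable def pair (p : EuclideanSpace ℝ (Fin L) × EuclideanSpace ℝ (Fin l)) :
    EuclideanSpace ℝ (Fin (L + l)) :=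
  WithLp.toLp 2 (fun i => Sum.elim p.1 p.2 (finSumFinEquiv.symm i))

lemma projL_pair (p : EuclideanSpace ℝ (Fin L) × EuclideanSpace ℝ (Fin l)) :
    projL (pair p) = p.1 := by
  ext i
  simp [projL, pair, finSumFinEquiv_symm_apply_castAdd]

lemma projR_pair (p : EuclideanSpace ℝ (Fin L) × EuclideanSpace ℝ (Fin l)) :
    projR (pair p) = p.2 := by
  ext j
  simp [projR, pair, finSumFinEquiv_symm_apply_natAdd]

lemma measurePreserving_pair :
    MeasurePreserving (pair (L := L) (l := l))
      ((volume : Measure (EuclideanSpace ℝ (Fin L))).prod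
        (volume : Measure (EuclideanSpace ℝ (Fin l)))) volume := by
  have h1 : MeasurePreserving
      (Prod.map (WithLp.ofLp (p := 2) (V := Fin L → ℝ))
        (WithLp.ofLp (p := 2) (V := Fin l → ℝ)))
      (((volume : Measure (EuclideanSpace ℝ (Fin L)))).prod
        (volume : Measure (EuclideanSpace ℝ (Fin l))))
      ((volume : Measure (Fin L → ℝ)).prod (volume : Measure (Fin l → ℝ))) :=
    (PiLp.volume_preserving_ofLp (Fin L)).prod
      (PiLp.volume_preserving_ofLp (Fin l))
  have h2 := MeasureTheory.volume_measurePreserving_sumPiEquivProdPi_symm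
    (fun _ : Fin L ⊕ Fin l => ℝ)
  have h3 := MeasureTheory.volume_measurePreserving_piCongrLeft
    (fun _ : Fin (L + l) => ℝ) finSumFinEquiv
  have h4 := PiLp.volume_preserving_toLp (Fin (L + l))
  have key := ((h4.comp h3).comp h2).comp h1
  convert key using 1
  · rfl
  funext p
  ext i
  obtain ⟨s, rfl⟩ := finSumFinEquiv.surjective i
  show Sum.elim p.1 p.2 (finSumFinEquiv.symm (finSumFinEquiv s)) = _
  simp only [Equiv.symm_apply_apply, Function.comp_apply,
    MeasurableEquiv.coe_piCongrLeft, MeasurableEquiv.coe_sumPiEquivProdPi_symm,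
    Equiv.piCongrLeft_apply_apply]
  cases s with
  | inl a => simp [Equiv.sumPiEquivProdPi_symm_apply]
  | inr a => simp [Equiv.sumPiEquivProdPi_symm_apply]

lemma exp_ofReal_eq (u : ℝ) {X : Set (EuclideanSpace ℝ (Fin L))} (hX : IsCompact X)
    (hXne : X.Nonempty) (z : EuclideanSpace ℝ (Fin (L + l))) :
    ENNReal.ofReal (Real.exp (-Real.pi * u ^ 2 * Metric.infDist z (stdIncl L l '' X) ^ 2)) =
      ENNReal.ofReal (Real.exp (-Real.pi * u ^ 2 * Metric.infDist (projL z) X ^ 2)) *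
        ENNReal.ofReal (Real.exp (-Real.pi * u ^ 2 * ‖projR z‖ ^ 2)) := by
  rw [infDist_stdIncl hX hXne, Real.sq_sqrt (by positivity)]
  rw [← ENNReal.ofReal_mul (Real.exp_nonneg _), ← Real.exp_add]
  congr 2
  ring


lemma integrable_gauss {l : ℕ} {b : ℝ} (hb : 0 < b) :
    Integrable (fun v : EuclideanSpace ℝ (Fin l) => Real.exp (-b * ‖v‖ ^ 2)) := by
  have h := GaussianFourier.integrable_cexp_neg_mul_sq_norm_add (V := EuclideanSpace ℝ (Fin l))
    (b := (b : ℂ)) (by simpa using hb) 0 0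
  have h2 := h.re
  refine h2.congr (Filter.Eventually.of_forall fun v => ?_)
  simp [← Complex.ofReal_pow, ← Complex.ofReal_mul, ← Complex.ofReal_neg, ← Complex.ofReal_exp]

lemma gauss_lintegral {l : ℕ} {u : ℝ} (hu : 0 < u) :
    (∫⁻ v : EuclideanSpace ℝ (Fin l),
      ENNReal.ofReal (Real.exp (-Real.pi * u ^ 2 * ‖v‖ ^ 2))) = ENNReal.ofReal (u⁻¹ ^ l) := by
  have hb : (0:ℝ) < Real.pi * u ^ 2 := by positivity
  have heq : ∀ v : EuclideanSpace ℝ (Fin l),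
      -Real.pi * u ^ 2 * ‖v‖ ^ 2 = -(Real.pi * u ^ 2) * ‖v‖ ^ 2 := fun v => by ring
  simp_rw [heq]
  rw [← MeasureTheory.ofReal_integral_eq_lintegral_ofReal (integrable_gauss hb)
    (Filter.Eventually.of_forall fun v => (Real.exp_nonneg _))]
  congr 1
  rw [GaussianFourier.integral_rexp_neg_mul_sq_norm hb]
  have h1 : Real.pi / (Real.pi * u ^ 2) = (u⁻¹) ^ 2 := by
    rw [inv_pow]
    field_simp
  rw [h1, finrank_euclideanSpace_fin]
  rw [← Real.rpow_natCast (u⁻¹) 2, ← Real.rpow_mul (by positivity), ← Real.rpow_natCast _ l]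
  congr 1
  push_cast
  ring

end Stmt17Aux

/-- the Gaussian Minkowski content of a compact set in Euclidean space is
unchanged under the standard inclusion `ℝᴸ ⊆ ℝ^{L+ℓ}`: for a compact `X ⊆ ℝᴸ`, both the
lower and upper Gaussian `k`-contents of `X × {0} ⊆ ℝ^{L+ℓ}` (here the image of `X`
under the standard inclusion) equal those of `X` in `ℝᴸ`. -/
theorem stmt_17 (L l k : ℕ) (X : Set (EuclideanSpace ℝ (Fin L)))
    (hX : IsCompact X) (hXne : X.Nonempty) (hkL : k ≤ L) :
    lowerGaussMink (volume : Measure (EuclideanSpace ℝ (Fin (L + l)))) (L + l - k)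
        (stdIncl L l '' X) =
      lowerGaussMink (volume : Measure (EuclideanSpace ℝ (Fin L))) (L - k) X ∧
    upperGaussMink (volume : Measure (EuclideanSpace ℝ (Fin (L + l)))) (L + l - k)
        (stdIncl L l '' X) =
      upperGaussMink (volume : Measure (EuclideanSpace ℝ (Fin L))) (L - k) X := by
  have key : ∀ᶠ u : ℝ in atTop,
      (ENNReal.ofReal (u ^ (L + l - k)) * ∫⁻ z : EuclideanSpace ℝ (Fin (L + l)),
        ENNReal.ofReal (Real.exp (-Real.pi * u ^ 2 *
          Metric.infDist z (stdIncl L l '' X) ^ 2))) =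
      ENNReal.ofReal (u ^ (L - k)) * ∫⁻ x : EuclideanSpace ℝ (Fin L),
        ENNReal.ofReal (Real.exp (-Real.pi * u ^ 2 * Metric.infDist x X ^ 2)) := by
    filter_upwards [eventually_gt_atTop (0:ℝ)] with u hu
    have hcontF : Continuous fun x : EuclideanSpace ℝ (Fin L) =>
        ENNReal.ofReal (Real.exp (-Real.pi * u ^ 2 * Metric.infDist x X ^ 2)) :=
      ENNReal.continuous_ofReal.comp (Real.continuous_exp.comp
        (continuous_const.mul ((Metric.continuous_infDist_pt X).pow 2)))
    have hcontG : Continuous fun v : EuclideanSpace ℝ (Fin l) =>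
        ENNReal.ofReal (Real.exp (-Real.pi * u ^ 2 * ‖v‖ ^ 2)) :=
      ENNReal.continuous_ofReal.comp (Real.continuous_exp.comp
        (continuous_const.mul (continuous_norm.pow 2)))
    have hcont : Continuous fun z : EuclideanSpace ℝ (Fin (L + l)) =>
        ENNReal.ofReal (Real.exp (-Real.pi * u ^ 2 *
          Metric.infDist z (stdIncl L l '' X) ^ 2)) :=
      ENNReal.continuous_ofReal.comp (Real.continuous_exp.comp
        (continuous_const.mul ((Metric.continuous_infDist_pt _).pow 2)))
    rw [← Stmt17Aux.measurePreserving_pair.lintegral_comp hcont.measurable]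
    have hsplit : ∀ p : EuclideanSpace ℝ (Fin L) × EuclideanSpace ℝ (Fin l),
        ENNReal.ofReal (Real.exp (-Real.pi * u ^ 2 *
          Metric.infDist (Stmt17Aux.pair p) (stdIncl L l '' X) ^ 2)) =
        ENNReal.ofReal (Real.exp (-Real.pi * u ^ 2 * Metric.infDist p.1 X ^ 2)) *
          ENNReal.ofReal (Real.exp (-Real.pi * u ^ 2 * ‖p.2‖ ^ 2)) := by
      intro p
      rw [Stmt17Aux.exp_ofReal_eq u hX hXne, Stmt17Aux.projL_pair, Stmt17Aux.projR_pair]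
    simp_rw [hsplit]
    rw [MeasureTheory.lintegral_prod_mul hcontF.measurable.aemeasurable
      hcontG.measurable.aemeasurable]
    rw [Stmt17Aux.gauss_lintegral hu]
    rw [mul_comm (∫⁻ x : EuclideanSpace ℝ (Fin L), _) _, ← mul_assoc,
      ← ENNReal.ofReal_mul (by positivity)]
    congr 2
    rw [show L + l - k = (L - k) + l by omega, pow_add]
    field_simp
    rw [← mul_pow, mul_one_div_cancel hu.ne', one_pow]
  exact ⟨liminf_congr key, limsup_congr key⟩
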